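/- For any two nonempty finite words ω and τ of positive integers with p_ω = p_τ, one has ∫_{J_ω} (x − a(ω))² dP(x) = ∫_{J_τ} (x − a(τ))² dP(x). -/

import Mathlib

open MeasureTheory Set
open scoped ENNReal

noncomputable section

/-- The similarity map `S_j(x) = x/3^j + 1 - 1/3^(j-1)`. -/
def Smap (j : ℕ) (x : ℝ) : ℝ := x / 3 ^ j + 1 - 1 / 3 ^ (j - 1)

/-- The similarity ratio `s_j = 3^(-j)`. -/
def srat (j : ℕ) : ℝ := (3 : ℝ)⁻¹ ^ j

/-- The probability `p_j = 2^(-j)`. -/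
def prob (j : ℕ) : ℝ := (2 : ℝ)⁻¹ ^ j

/-- `J_j = S_j([0,1])`. -/
def Jset (j : ℕ) : Set ℝ := Smap j '' Set.Icc 0 1

/-- For a word `ω = ω₁⋯ω_n`, `S_ω = S_{ω₁} ∘ ⋯ ∘ S_{ω_n}`. -/
def Sword : List ℕ → ℝ → ℝ
  | [] => id
  | j :: ω => Smap j ∘ Sword ω

/-- `s_ω = s_{ω₁} ⋯ s_{ω_n}`. -/
def sword (ω : List ℕ) : ℝ := (ω.map srat).prod

/-- `p_ω = p_{ω₁} ⋯ p_{ω_n}`. -/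
def pword (ω : List ℕ) : ℝ := (ω.map prob).prod

/-- `J_ω = S_ω([0,1])`. -/
def Jword (ω : List ℕ) : Set ℝ := Sword ω '' Set.Icc 0 1

/-- `ω⁻(ω_{|ω|} + j)` : the word obtained from `ω` by increasing its last letter by `j`. -/
def wordInc (ω : List ℕ) (j : ℕ) : List ℕ := ω.dropLast ++ [ω.getLastD 1 + j]

/-- `a(ω) = S_ω(1/2)`. -/
def aw (ω : List ℕ) : ℝ := Sword ω (1 / 2)

/-- `a(ω, ∞) = S_{ω⁻(ω_{|ω|}+1)}(1/2) + s_{ω⁻(ω_{|ω|}+1)}`. -/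
def awInf (ω : List ℕ) : ℝ := Sword (wordInc ω 1) (1 / 2) + sword (wordInc ω 1)

/-- `J_{(ω,∞)} = ⋃_{j ≥ 1} J_{ω⁻(ω_{|ω|}+j)}`. -/
def JwordInf (ω : List ℕ) : Set ℝ := ⋃ j : ℕ, Jword (wordInc ω (j + 1))

/-- A (nonempty) word over the alphabet `ℕ = {1, 2, 3, …}`. -/
def IsWord (ω : List ℕ) : Prop := ω ≠ [] ∧ ∀ i ∈ ω, 1 ≤ i

/-- The self-similarity equation `P = ∑_{j=1}^∞ 2^{-j} · P ∘ S_j^{-1}`. -/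
def SelfSim (P : Measure ℝ) : Prop :=
  P = Measure.sum fun j : ℕ => ((2 : ℝ≥0∞) ^ (j + 1))⁻¹ • P.map (Smap (j + 1))

/-- The distortion error `∫ min_{a ∈ A} (x - a)² dP(x)` of a set `A` of points. -/
def err (P : Measure ℝ) (A : Set ℝ) : ℝ :=
  ∫ x, sInf ((fun a => (x - a) ^ 2) '' A) ∂P

/-- The `n`-th quantization error. -/
def quantErr (P : Measure ℝ) (n : ℕ) : ℝ :=
  sInf {v | ∃ A : Set ℝ, A.Finite ∧ A.Nonempty ∧ A.ncard ≤ n ∧ v = err P A}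

/-- An optimal set of `n`-means. -/
def IsOptimal (P : Measure ℝ) (n : ℕ) (A : Set ℝ) : Prop :=
  A.Finite ∧ A.Nonempty ∧ A.ncard ≤ n ∧ err P A = quantErr P n

/-- The Voronoi region of `a` with respect to `A`. -/
def voronoi (A : Set ℝ) (a : ℝ) : Set ℝ := {x | ∀ b ∈ A, |x - a| ≤ |x - b|}

/-- `α(ℓ) = {a(ω) : p_ω = 2^{-ℓ}} ∪ {a(ω,∞) : p_ω = 2^{-ℓ}}`. -/
def alphaSet (l : ℕ) : Set ℝ :=
  {x | ∃ ω : List ℕ, IsWord ω ∧ pword ω = (2 : ℝ)⁻¹ ^ l ∧ (x = aw ω ∨ x = awInf ω)}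

/-- The set `α_n(I)` built from `α(ℓ)` and `I ⊆ α(ℓ)`. -/
def alphaNI (l : ℕ) (I : Set ℝ) : Set ℝ :=
  (alphaSet l \ I)
    ∪ {x | ∃ ω : List ℕ, IsWord ω ∧ pword ω = (2 : ℝ)⁻¹ ^ l ∧ aw ω ∈ I ∧
        (x = aw (ω ++ [1]) ∨ x = awInf (ω ++ [1]))}
    ∪ {x | ∃ ω : List ℕ, IsWord ω ∧ pword ω = (2 : ℝ)⁻¹ ^ l ∧ awInf ω ∈ I ∧
        (x = aw (wordInc ω 1) ∨ x = awInf (wordInc ω 1))}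


section AuxQuant

lemma smap_sub (j : ℕ) (x y : ℝ) : Smap j x - Smap j y = srat j * (x - y) := by
  simp only [Smap, srat, inv_pow, div_eq_mul_inv]
  ring

lemma srat_pos (j : ℕ) : 0 < srat j := by
  unfold srat; positivity

lemma smap_mono (j : ℕ) : Monotone (Smap j) := by
  intro x y hxy
  have h := smap_sub j y x
  nlinarith [mul_nonneg (srat_pos j).le (sub_nonneg.2 hxy)]

lemma smap_injective (j : ℕ) : Function.Injective (Smap j) := by
  intro x y hxy
  have h := smap_sub j x y
  rw [hxy, sub_self] at h
  rcases mul_eq_zero.1 h.symm with h' | h'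
  · exact absurd h' (srat_pos j).ne'
  · linarith

lemma smap_mem (j : ℕ) (hj : 1 ≤ j) {x : ℝ} (hx : x ∈ Icc (0:ℝ) 1) :
    Smap j x ∈ Icc (0:ℝ) 1 := by
  obtain ⟨m, rfl⟩ : ∃ m, j = m + 1 := ⟨j - 1, by omega⟩
  obtain ⟨hx0, hx1⟩ := hx
  have h3 : (0:ℝ) < 3 ^ m := by positivity
  have h3' : (1:ℝ) ≤ 3 ^ m := one_le_pow₀ (by norm_num)
  have e1 : (1:ℝ)/3^m ≤ 1 := by rw [div_le_one h3]; exact h3'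
  have e2 : 0 ≤ x / 3 ^ (m+1) := by positivity
  have e3 : x / 3^(m+1) ≤ 1 / 3^(m+1) := by gcongr
  have e5 : 0 ≤ (1:ℝ)/3^(m+1) := by positivity
  have e4 : (1:ℝ)/3^(m+1) + 1/3^(m+1) ≤ 1/3^m := by
    rw [← add_div, div_le_div_iff₀ (by positivity) h3, pow_succ]
    nlinarith
  simp only [Smap, Nat.add_sub_cancel]
  constructor
  · linarith
  · linarith

lemma smap_lt (j k : ℕ) (hj : 1 ≤ j) (hjk : j < k) {x y : ℝ}
    (hx : x ∈ Icc (0:ℝ) 1) (hy : y ∈ Icc (0:ℝ) 1) : Smap j x < Smap k y := by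
  have h1 : Smap j x ≤ Smap j 1 := smap_mono j hx.2
  have h2 : Smap k 0 ≤ Smap k y := smap_mono k hy.1
  obtain ⟨a, rfl⟩ : ∃ a, j = a + 1 := ⟨j - 1, by omega⟩
  obtain ⟨b, rfl⟩ : ∃ b, k = b + 1 := ⟨k - 1, by omega⟩
  have hab : a + 1 ≤ b := by omega
  have hpow : (3:ℝ)^(a+1) ≤ 3^b := pow_le_pow_right₀ (by norm_num) hab
  have p1 : (0:ℝ) < 3^(a+1) := by positivity
  have p0 : (0:ℝ) < 3^a := by positivity
  have key : Smap (a+1) 1 < Smap (b+1) 0 := by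
    simp only [Smap, Nat.add_sub_cancel, zero_div]
    have e1 : (1:ℝ)/3^b ≤ 1/3^(a+1) := one_div_le_one_div_of_le p1 hpow
    have e2 : (1:ℝ)/3^(a+1) + 1/3^(a+1) < 1/3^a := by
      rw [← add_div, div_lt_div_iff₀ p1 p0, pow_succ]
      nlinarith
    linarith
  linarith

lemma Jword_nil : Jword [] = Icc (0:ℝ) 1 := by
  simp [Jword, Sword]

lemma Jword_cons (j : ℕ) (ω : List ℕ) : Jword (j :: ω) = Smap j '' Jword ω := by
  show (Smap j ∘ Sword ω) '' Icc 0 1 = _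
  rw [Set.image_comp]
  rfl

lemma Jword_subset (ω : List ℕ) (hω : ∀ i ∈ ω, 1 ≤ i) : Jword ω ⊆ Icc (0:ℝ) 1 := by
  induction ω with
  | nil => rw [Jword_nil]
  | cons j ω ih =>
    rw [Jword_cons]
    rintro y ⟨x, hx, rfl⟩
    exact smap_mem j (hω j (List.mem_cons_self))
      (ih (fun i hi => hω i (List.mem_cons_of_mem j hi)) hx)

lemma sword_nil : sword [] = 1 := by simp [sword]

lemma sword_cons (j : ℕ) (ω : List ℕ) : sword (j :: ω) = srat j * sword ω := by
  simp [sword]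

lemma pword_nil : pword [] = 1 := by simp [pword]

lemma pword_cons (j : ℕ) (ω : List ℕ) : pword (j :: ω) = prob j * pword ω := by
  simp [pword]

lemma sword_pos (ω : List ℕ) : 0 < sword ω := by
  induction ω with
  | nil => rw [sword_nil]; norm_num
  | cons j ω ih => rw [sword_cons]; exact mul_pos (srat_pos j) ih

lemma pword_eq_pow (ω : List ℕ) : pword ω = (2:ℝ)⁻¹ ^ ω.sum := by
  induction ω with
  | nil => simp [pword_nil]
  | cons j ω ih => rw [pword_cons, ih, List.sum_cons, pow_add]; rfl

lemma sword_eq_pow (ω : List ℕ) : sword ω = (3:ℝ)⁻¹ ^ ω.sum := by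
  induction ω with
  | nil => simp [sword_nil]
  | cons j ω ih => rw [sword_cons, ih, List.sum_cons, pow_add]; rfl

lemma pword_pos (ω : List ℕ) : 0 < pword ω := by
  rw [pword_eq_pow]; positivity

lemma sum_eq_of_pword_eq {ω τ : List ℕ} (h : pword ω = pword τ) : ω.sum = τ.sum := by
  rw [pword_eq_pow, pword_eq_pow, inv_pow, inv_pow, inv_inj] at h
  have h2 : ((2 ^ ω.sum : ℕ) : ℝ) = ((2 ^ τ.sum : ℕ) : ℝ) := by push_cast; exact h
  exact Nat.pow_right_injective le_rfl (Nat.cast_injective h2)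

lemma sword_apply (ω : List ℕ) (x : ℝ) : Sword ω x = Sword ω 0 + sword ω * x := by
  induction ω with
  | nil => simp [Sword, sword_nil]
  | cons j ω ih =>
    have h := smap_sub j (Sword ω x) (Sword ω 0)
    have hx : Sword ω x - Sword ω 0 = sword ω * x := by rw [ih]; ring
    rw [hx] at h
    show Smap j (Sword ω x) = Smap j (Sword ω 0) + sword (j :: ω) * x
    rw [sword_cons]
    linarith [h]

lemma Jword_eq_Icc (ω : List ℕ) :
    Jword ω = Icc (Sword ω 0) (Sword ω 0 + sword ω) := by
  have hs := sword_pos ω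
  ext y
  constructor
  · rintro ⟨x, ⟨hx0, hx1⟩, rfl⟩
    have hx := sword_apply ω x
    constructor
    · nlinarith [mul_nonneg hs.le hx0]
    · nlinarith [mul_le_mul_of_nonneg_left hx1 hs.le]
  · rintro ⟨h1, h2⟩
    refine ⟨(y - Sword ω 0) / sword ω, ⟨div_nonneg (by linarith) hs.le, ?_⟩, ?_⟩
    · rw [div_le_one hs]; linarith
    · rw [sword_apply]; field_simp; ring

lemma Jword_measurableSet (ω : List ℕ) : MeasurableSet (Jword ω) := by
  rw [Jword_eq_Icc]; exact measurableSet_Icc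

lemma aw_cons (j : ℕ) (ω : List ℕ) : aw (j :: ω) = Smap j (aw ω) := rfl

lemma smap_measurable (j : ℕ) : Measurable (Smap j) := by
  unfold Smap; fun_prop

lemma sq_ofReal_measurable (a : ℝ) :
    Measurable fun x : ℝ => ENNReal.ofReal ((x - a) ^ 2) := by
  fun_prop

lemma ae_mem_Icc (P : Measure ℝ) [IsProbabilityMeasure P]
    (hsupp : P (Set.Icc 0 1) = 1) : ∀ᵐ x ∂P, x ∈ Icc (0:ℝ) 1 := by
  have hc : P (Icc (0:ℝ) 1)ᶜ = 0 := by
    rw [measure_compl measurableSet_Icc (measure_ne_top _ _), hsupp, measure_univ]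
    simp
  rw [ae_iff]
  exact hc

lemma key_lintegral (P : Measure ℝ) [IsProbabilityMeasure P]
    (hsupp : P (Set.Icc 0 1) = 1) (hself : SelfSim P) :
    ∀ ω : List ℕ, (∀ i ∈ ω, 1 ≤ i) →
    (∫⁻ x, (Jword ω).indicator (fun x => ENNReal.ofReal ((x - aw ω) ^ 2)) x ∂P)
      = ENNReal.ofReal (pword ω * sword ω ^ 2) *
        ∫⁻ x, (Icc (0:ℝ) 1).indicator
          (fun x => ENNReal.ofReal ((x - aw []) ^ 2)) x ∂P := by
  intro ω
  induction ω with
  | nil =>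
    intro _
    rw [Jword_nil, pword_nil, sword_nil]
    norm_num
  | cons j ω ih =>
    intro hw
    have hj : 1 ≤ j := hw j (List.mem_cons_self)
    have hw' : ∀ i ∈ ω, 1 ≤ i := fun i hi => hw i (List.mem_cons_of_mem j hi)
    set g : ℝ → ℝ≥0∞ := fun x => ENNReal.ofReal ((x - aw ω) ^ 2) with hgdef
    set G : ℝ → ℝ≥0∞ :=
      (Jword (j :: ω)).indicator (fun x => ENNReal.ofReal ((x - aw (j :: ω)) ^ 2)) with hGdef
    have hGmeas : Measurable G :=
      (sq_ofReal_measurable _).indicator (Jword_measurableSet _)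
    have hgind : Measurable ((Jword ω).indicator g) :=
      (sq_ofReal_measurable _).indicator (Jword_measurableSet _)
    have step1 : (∫⁻ x, G x ∂P)
        = ∑' k : ℕ, ((2:ℝ≥0∞) ^ (k+1))⁻¹ * ∫⁻ x, G (Smap (k+1) x) ∂P := by
      conv_lhs => rw [hself]
      rw [lintegral_sum_measure]
      congr 1
      ext k
      rw [lintegral_smul_measure, lintegral_map hGmeas (smap_measurable _), smul_eq_mul]
    have hzero : ∀ k : ℕ, k ≠ j - 1 →
        ((2:ℝ≥0∞) ^ (k+1))⁻¹ * ∫⁻ x, G (Smap (k+1) x) ∂P = 0 := by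
      intro k hk
      have hae : ∀ᵐ x ∂P, G (Smap (k+1) x) = 0 := by
        filter_upwards [ae_mem_Icc P hsupp] with x hx
        apply Set.indicator_of_notMem
        intro hmem
        rw [Jword_cons] at hmem
        obtain ⟨y, hy, hxy⟩ := hmem
        have hy1 : y ∈ Icc (0:ℝ) 1 := Jword_subset ω hw' hy
        have hne : k + 1 ≠ j := by omega
        rcases Nat.lt_or_ge (k+1) j with hlt | hge
        · exact absurd hxy (ne_of_gt (smap_lt (k+1) j (by omega) hlt hx hy1))
        · have : j < k + 1 := by omega
          exact absurd hxy (ne_of_lt (smap_lt j (k+1) hj this hy1 hx))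
      rw [lintegral_congr_ae hae, lintegral_zero, mul_zero]
    have hGS : ∀ x : ℝ, G (Smap j x)
        = ENNReal.ofReal (srat j ^ 2) * (Jword ω).indicator g x := by
      intro x
      by_cases hx : x ∈ Jword ω
      · have hmem : Smap j x ∈ Jword (j :: ω) := by
          rw [Jword_cons]; exact ⟨x, hx, rfl⟩
        rw [hGdef]
        rw [Set.indicator_of_mem hmem, Set.indicator_of_mem hx, hgdef]
        have hsub : Smap j x - aw (j :: ω) = srat j * (x - aw ω) := by
          rw [aw_cons]; exact smap_sub j x (aw ω)
        rw [hsub, mul_pow, ENNReal.ofReal_mul (by positivity)]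
      · have hmem : Smap j x ∉ Jword (j :: ω) := by
          rw [Jword_cons]
          rintro ⟨y, hy, hxy⟩
          exact hx (smap_injective j hxy ▸ hy)
        rw [hGdef]
        rw [Set.indicator_of_notMem hmem, Set.indicator_of_notMem hx, mul_zero]
    have hmain : (∫⁻ x, G (Smap j x) ∂P)
        = ENNReal.ofReal (srat j ^ 2) * ∫⁻ x, (Jword ω).indicator g x ∂P := by
      simp_rw [hGS]
      rw [lintegral_const_mul _ hgind]
    rw [step1, tsum_eq_single (j-1) hzero]
    have hj1 : j - 1 + 1 = j := by omega
    rw [hj1, hmain, ih hw']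
    have h2 : ((2:ℝ≥0∞) ^ j)⁻¹ = ENNReal.ofReal ((2:ℝ)⁻¹ ^ j) := by
      rw [inv_pow, ENNReal.ofReal_inv_of_pos (by positivity), ENNReal.ofReal_pow (by norm_num)]
      norm_num
    rw [h2, ← mul_assoc, ← mul_assoc, ← ENNReal.ofReal_mul (by positivity),
      ← ENNReal.ofReal_mul (by positivity)]
    congr 2
    rw [pword_cons, sword_cons]
    have hprob : prob j = (2:ℝ)⁻¹ ^ j := rfl
    rw [hprob]
    ring

end AuxQuant

theorem error_eq_of_pword_eq (P : Measure ℝ) [IsProbabilityMeasure P]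
    (hsupp : P (Set.Icc 0 1) = 1) (hself : SelfSim P)
    (ω τ : List ℕ) (hω : IsWord ω) (hτ : IsWord τ) (h : pword ω = pword τ) :
    (∫ x in Jword ω, (x - aw ω) ^ 2 ∂P) = ∫ x in Jword τ, (x - aw τ) ^ 2 ∂P := by
  have conv : ∀ σ : List ℕ, (∀ i ∈ σ, 1 ≤ i) →
      (∫ x in Jword σ, (x - aw σ) ^ 2 ∂P)
        = (ENNReal.ofReal (pword σ * sword σ ^ 2) *
            ∫⁻ x, (Icc (0:ℝ) 1).indicator
              (fun x => ENNReal.ofReal ((x - aw []) ^ 2)) x ∂P).toReal := by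
    intro σ hσ
    have hc : Continuous fun x : ℝ => (x - aw σ) ^ 2 := by fun_prop
    rw [integral_eq_lintegral_of_nonneg_ae (ae_of_all _ fun x => sq_nonneg _)
      hc.aestronglyMeasurable]
    rw [← lintegral_indicator (Jword_measurableSet σ)]
    rw [key_lintegral P hsupp hself σ hσ]
  rw [conv ω hω.2, conv τ hτ.2]
  have hs : ω.sum = τ.sum := sum_eq_of_pword_eq h
  rw [h, sword_eq_pow, sword_eq_pow, hs]


end
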